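/- arXiv:2410.20694 — 2 statements merged into one kernel-verified Lean document; each statement's English description precedes it below -/
import Mathlib

section
/- Let n ≥ 1 and let a < b be real numbers. Let A ⊆ {x ∈ ℝⁿ : x₁ = a} be a nonempty compact convex set and let V ∈ ℝⁿ with first coordinate V₁ = b. Set C := conv(A ∪ {V}) and, for t ∈ [a, b], set C(t) := C ∩ {x ∈ ℝⁿ : x₁ ≥ t}. Then for all integers ℓ, k with 1 ≤ ℓ ≤ k and every t ∈ [a, b − (ℓ/k)(b − a)], one has #(C(t) ∩ ℤⁿ/k) ≥ min_{x ∈ [−1/2, 1/2]ⁿ} #((C + x) ∩ ℤⁿ/ℓ). -/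
open Set Pointwise

/-- The rescaled lattice `ℤⁿ/k` inside `ℝⁿ`. -/
def lpts (n k : ℕ) : Set (EuclideanSpace ℝ (Fin n)) :=
  {x | ∀ i, ∃ m : ℤ, (k : ℝ) * x i = (m : ℝ)}

/-- The unit cube `[−1/2, 1/2]ⁿ` inside `ℝⁿ`. -/
def unitCube (n : ℕ) : Set (EuclideanSpace ℝ (Fin n)) :=
  {x | ∀ i, |x i| ≤ 1 / 2}

lemma coord_le_norm {n : ℕ} (x : EuclideanSpace ℝ (Fin n)) (i : Fin n) : |x i| ≤ ‖x‖ := by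
  rw [EuclideanSpace.norm_eq, ← Real.sqrt_sq_eq_abs]
  apply Real.sqrt_le_sqrt
  calc (x i)^2 = ‖x i‖^2 := by rw [Real.norm_eq_abs, sq_abs]
    _ ≤ ∑ j, ‖x j‖^2 := Finset.single_le_sum (f := fun j => ‖x j‖^2)
        (fun j _ => sq_nonneg _) (Finset.mem_univ i)

theorem stmt8 (n : ℕ) (hn : 0 < n) (a b : ℝ) (hab : a < b)
    (A : Set (EuclideanSpace ℝ (Fin n))) (hAne : A.Nonempty) (hAcp : IsCompact A)
    (hAcv : Convex ℝ A) (hA1 : ∀ x ∈ A, x ⟨0, hn⟩ = a)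
    (V : EuclideanSpace ℝ (Fin n)) (hV : V ⟨0, hn⟩ = b)
    (ℓ k : ℕ) (hℓ : 1 ≤ ℓ) (hℓk : ℓ ≤ k)
    (t : ℝ) (ht : a ≤ t) (htb : t ≤ b - ((ℓ : ℝ) / (k : ℝ)) * (b - a)) :
    sInf ((fun x => (((fun y => y + x) '' convexHull ℝ (A ∪ {V})) ∩ lpts n ℓ).ncard)
        '' unitCube n)
      ≤ ((convexHull ℝ (A ∪ {V}) ∩ {x : EuclideanSpace ℝ (Fin n) | t ≤ x ⟨0, hn⟩}
          ∩ lpts n k)).ncard := by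
  set i0 : Fin n := ⟨0, hn⟩ with hi0
  set C : Set (EuclideanSpace ℝ (Fin n)) := convexHull ℝ (A ∪ {V}) with hCdef
  have hk1 : 1 ≤ k := le_trans hℓ hℓk
  have hkR : (0:ℝ) < k := by exact_mod_cast hk1
  have hℓR : (0:ℝ) < ℓ := by exact_mod_cast hℓ
  set μ : ℝ := (ℓ:ℝ)/(k:ℝ) with hμdef
  have hμ0 : 0 < μ := div_pos hℓR hkR
  have hμ1 : μ ≤ 1 := by rw [hμdef, div_le_one hkR]; exact_mod_cast hℓk
  -- the translation vector
  set x0 : EuclideanSpace ℝ (Fin n) :=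
    WithLp.toLp 2 (fun i => (((k:ℝ)-(ℓ:ℝ)) * V i - (round (((k:ℝ)-(ℓ:ℝ)) * V i) : ℤ)) / (ℓ:ℝ)) with hx0def
  have hx0 : ∀ i, x0 i = (((k:ℝ)-(ℓ:ℝ)) * V i - (round (((k:ℝ)-(ℓ:ℝ)) * V i) : ℤ)) / (ℓ:ℝ) :=
    fun i => rfl
  have hx0cube : x0 ∈ unitCube n := by
    intro i
    rw [hx0, abs_div, abs_of_pos hℓR]
    have h2 : (1:ℝ) ≤ (ℓ:ℝ) := by exact_mod_cast hℓ
    calc |((k:ℝ)-(ℓ:ℝ)) * V i - (round (((k:ℝ)-(ℓ:ℝ)) * V i) : ℤ)| / (ℓ:ℝ)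
        ≤ (1/2) / (ℓ:ℝ) := by
          gcongr
          exact abs_sub_round _
      _ ≤ 1/2 := div_le_self (by norm_num) h2
  -- the injection
  set φ : EuclideanSpace ℝ (Fin n) → EuclideanSpace ℝ (Fin n) :=
    (fun y => WithLp.toLp 2 (fun i => μ * y i + (round (((k:ℝ)-(ℓ:ℝ)) * V i) : ℤ) / (k:ℝ))) with hφdef
  have hφ : ∀ y i, φ y i = μ * y i + (round (((k:ℝ)-(ℓ:ℝ)) * V i) : ℤ) / (k:ℝ) :=
    fun y i => rfl
  have hφinj : Function.Injective φ := by
    intro y z h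
    ext i
    have := congrArg (fun w => w i) h
    have h2 : μ * y i + (round (((k:ℝ)-(ℓ:ℝ)) * V i) : ℤ) / (k:ℝ)
        = μ * z i + (round (((k:ℝ)-(ℓ:ℝ)) * V i) : ℤ) / (k:ℝ) := this
    have := add_right_cancel h2
    exact mul_left_cancel₀ (ne_of_gt hμ0) this
  have hVC : V ∈ C := subset_convexHull ℝ _ (Or.inr rfl)
  have hCconv : Convex ℝ C := convex_convexHull ℝ _
  have hCa : ∀ c ∈ C, a ≤ c i0 := by
    intro c hc
    have hlin : IsLinearMap ℝ (fun x : EuclideanSpace ℝ (Fin n) => x i0) :=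
      ⟨fun _ _ => rfl, fun _ _ => rfl⟩
    refine convexHull_min ?_ (convex_halfSpace_ge hlin a) hc
    rintro y (hy | hy)
    · exact le_of_eq (hA1 y hy).symm
    · have hyV : y = V := hy
      subst hyV
      show a ≤ y i0
      rw [hV]
      exact hab.le
  -- image of phi lands in the target set
  set L : Set (EuclideanSpace ℝ (Fin n)) := ((fun y => y + x0) '' C) ∩ lpts n ℓ with hLdef
  set T : Set (EuclideanSpace ℝ (Fin n)) :=
    C ∩ {x : EuclideanSpace ℝ (Fin n) | t ≤ x i0} ∩ lpts n k with hTdef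
  have hmaps : ∀ y ∈ L, φ y ∈ T := by
    rintro y ⟨⟨c, hc, rfl⟩, hyl⟩
    have hkey : ∀ i, φ (c + x0) i = μ * c i + (1 - μ) * V i := by
      intro i
      rw [hφ]
      have hadd : (c + x0) i = c i + x0 i := rfl
      rw [hadd, hx0, hμdef]
      have hk0 : (k:ℝ) ≠ 0 := ne_of_gt hkR
      have hl0 : (ℓ:ℝ) ≠ 0 := ne_of_gt hℓR
      field_simp
      ring
    refine ⟨⟨?_, ?_⟩, ?_⟩
    · have : φ (c + x0) = μ • c + (1-μ) • V := by
        ext i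
        rw [hkey]
        have h1 : (μ • c + (1-μ) • V) i = μ * c i + (1-μ) * V i := rfl
        rw [h1]
      rw [this]
      exact hCconv hc hVC (le_of_lt hμ0) (by linarith) (by ring)
    · show t ≤ φ (c + x0) i0
      rw [hkey i0, hV]
      have hca := hCa c hc
      nlinarith [mul_le_mul_of_nonneg_left hca (le_of_lt hμ0)]
    · intro i
      obtain ⟨m, hm⟩ := hyl i
      refine ⟨m + round (((k:ℝ)-(ℓ:ℝ)) * V i), ?_⟩
      have hm' : (ℓ:ℝ) * ((c + x0) i) = (m:ℝ) := hm
      have hk0 : (k:ℝ) ≠ 0 := ne_of_gt hkR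
      have e1 : (k:ℝ) * ((ℓ:ℝ)/(k:ℝ) * ((c + x0) i)
          + ((round (((k:ℝ)-(ℓ:ℝ)) * V i) : ℤ):ℝ)/(k:ℝ))
          = (ℓ:ℝ) * ((c + x0) i) + ((round (((k:ℝ)-(ℓ:ℝ)) * V i) : ℤ):ℝ) := by
        field_simp
      rw [hφ, hμdef]
      push_cast
      rw [e1, hm']
  -- T is finite
  have hCbdd : Bornology.IsBounded C := by
    rw [hCdef, isBounded_convexHull]
    exact hAcp.isBounded.union Bornology.isBounded_singleton
  obtain ⟨R, hR⟩ := hCbdd.subset_closedBall 0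
  have hTfin : T.Finite := by
    set g : EuclideanSpace ℝ (Fin n) → (Fin n → ℤ) := fun y i => ⌊(k:ℝ) * y i⌋ with hg
    have hginj : Set.InjOn g T := by
      rintro y ⟨-, hyl⟩ z ⟨-, hzl⟩ hgyz
      ext i
      obtain ⟨my, hmy⟩ := hyl i
      obtain ⟨mz, hmz⟩ := hzl i
      have h1 : g y i = my := by rw [hg]; simp [hmy]
      have h2 : g z i = mz := by rw [hg]; simp [hmz]
      have : my = mz := by rw [← h1, ← h2, hgyz]
      have := this ▸ hmy
      rw [← hmz] at this
      exact mul_left_cancel₀ (ne_of_gt hkR) this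
    have himg : g '' T ⊆ Set.pi Set.univ (fun _ : Fin n => Set.Icc (-⌈(k:ℝ)*R⌉) ⌈(k:ℝ)*R⌉) := by
      rintro - ⟨y, ⟨⟨hyC, -⟩, hyl⟩, rfl⟩
      intro i _
      obtain ⟨m, hm⟩ := hyl i
      have h1 : g y i = m := by rw [hg]; simp [hm]
      have hy0 : ‖y‖ ≤ R := by
        have := hR hyC
        simpa [Metric.mem_closedBall] using this
      have h2 : |(m:ℝ)| ≤ (k:ℝ) * R := by
        rw [← hm, abs_mul, abs_of_pos hkR]
        exact mul_le_mul_of_nonneg_left ((coord_le_norm y i).trans hy0) (le_of_lt hkR)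
      have h3 : |(m:ℝ)| ≤ (⌈(k:ℝ)*R⌉ : ℝ) := h2.trans (Int.le_ceil _)
      rw [← Int.cast_abs] at h3
      have h4 : |m| ≤ ⌈(k:ℝ)*R⌉ := by exact_mod_cast h3
      rw [h1]
      exact abs_le.mp h4
    exact Set.Finite.of_finite_image
      ((Set.Finite.pi (fun _ => Set.finite_Icc _ _)).subset himg) hginj
  -- conclude
  have hsub : φ '' L ⊆ T := by rintro - ⟨y, hy, rfl⟩; exact hmaps y hy
  have hle : L.ncard ≤ T.ncard := by
    rw [← Set.ncard_image_of_injective L hφinj]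
    exact Set.ncard_le_ncard hsub hTfin
  refine le_trans (Nat.sInf_le ⟨x0, hx0cube, rfl⟩) hle
end

section
/- Let n ≥ 1 and let Δ ⊂ ℝⁿ be a convex body with nonempty interior. Set σ := min_{x ∈ Δ} p₁(x), S₀ := max_{x ∈ Δ} p₁(x), and a := (σ + S₀)/2. Then there exists a constant C > 0 such that for every integer k ≥ 1 and every s ∈ [a, S₀], one has S₀ − s ≤ C·(1 + #(Δ ∩ {x ∈ ℝⁿ : p₁(x) > s} ∩ ℤⁿ/k))^{1/n} / k. -/
open Set

lemma abs_apply_le (n : ℕ) (x : EuclideanSpace ℝ (Fin n)) (i : Fin n) : |x i| ≤ ‖x‖ := by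
  rw [EuclideanSpace.norm_eq]
  have h1 : |x i| = Real.sqrt (‖x i‖ ^ 2) := by
    rw [Real.sqrt_sq_eq_abs]; simp
  rw [h1]
  apply Real.sqrt_le_sqrt
  exact Finset.single_le_sum (f := fun j => ‖x j‖^2) (fun j _ => by positivity) (Finset.mem_univ i)

lemma lpts_inter_finite (n k : ℕ) (hk : 1 ≤ k) (S : Set (EuclideanSpace ℝ (Fin n)))
    (hb : Bornology.IsBounded S) : (S ∩ lpts n k).Finite := by
  obtain ⟨R, hR⟩ := hb.exists_norm_le
  have hk0 : (0:ℝ) < k := by exact_mod_cast hk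
  set T : Set (Fin n → ℤ) := Set.pi Set.univ (fun _ => Set.Icc (-⌈(k:ℝ)*R⌉) ⌈(k:ℝ)*R⌉) with hT
  have hTfin : T.Finite := Set.Finite.pi fun i => Set.finite_Icc _ _
  have hsub : S ∩ lpts n k ⊆
      (fun m : Fin n → ℤ => (WithLp.toLp 2 (fun i => (m i : ℝ)/k) : EuclideanSpace ℝ (Fin n))) '' T := by
    rintro x ⟨hxS, hxl⟩
    refine ⟨fun i => (hxl i).choose, fun i _ => ?_, ?_⟩
    · have hmi := (hxl i).choose_spec
      have h1 : |((hxl i).choose : ℝ)| ≤ (k:ℝ)*R := by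
        rw [← hmi, abs_mul, abs_of_pos hk0]
        exact mul_le_mul_of_nonneg_left ((abs_apply_le n x i).trans (hR x hxS)) hk0.le
      have h2 : ((hxl i).choose : ℝ) ≤ (⌈(k:ℝ)*R⌉ : ℝ) :=
        le_trans (le_abs_self _) (h1.trans (Int.le_ceil _))
      have h3 : (-⌈(k:ℝ)*R⌉ : ℝ) ≤ ((hxl i).choose : ℝ) := by
        have := neg_abs_le ((hxl i).choose : ℝ)
        push_cast
        nlinarith [Int.le_ceil ((k:ℝ)*R)]
      exact ⟨by exact_mod_cast h3, by exact_mod_cast h2⟩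
    · ext i
      have hmi := (hxl i).choose_spec
      simp only [PiLp.toLp_apply]
      field_simp
      linarith [hmi]
  exact (hTfin.image _).subset hsub

lemma count_box (n k J : ℕ) (hk : 1 ≤ k) (α : Fin n → ℝ) (L : ℝ)
    (hJ : (J : ℝ) ≤ k * L)
    (T : Set (EuclideanSpace ℝ (Fin n))) (hT : T.Finite)
    (hsub : {x : EuclideanSpace ℝ (Fin n) | ∀ i, α i ≤ x i ∧ x i ≤ α i + L} ∩ lpts n k ⊆ T) :
    (J ^ n : ℕ) ≤ T.ncard := by
  have hk0 : (0:ℝ) < k := by exact_mod_cast hk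
  set φ : (Fin n → Fin J) → EuclideanSpace ℝ (Fin n) :=
    fun v => WithLp.toLp 2 (fun i => ((⌈(k:ℝ) * α i⌉ : ℝ) + (v i : ℝ)) / k) with hφ
  have hinj : Function.Injective φ := by
    intro v w h
    funext i
    have h2 : ((⌈(k:ℝ) * α i⌉ : ℝ) + (v i : ℝ)) / k = ((⌈(k:ℝ) * α i⌉ : ℝ) + (w i : ℝ)) / k :=
      congrArg (fun x : EuclideanSpace ℝ (Fin n) => x i) h
    field_simp at h2
    exact Fin.ext (by exact_mod_cast (by linarith : ((v i : ℕ) : ℝ) = (w i : ℕ)))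
  have hφv : ∀ v i, φ v i = ((⌈(k:ℝ) * α i⌉ : ℝ) + (v i : ℝ)) / k := fun v i => rfl
  have hmem : ∀ v, φ v ∈ T := by
    intro v
    apply hsub
    constructor
    · intro i
      have hceil : (k:ℝ) * α i ≤ (⌈(k:ℝ) * α i⌉ : ℝ) := Int.le_ceil _
      have hceil2 : (⌈(k:ℝ) * α i⌉ : ℝ) < (k:ℝ) * α i + 1 := Int.ceil_lt_add_one _
      have hv : (v i : ℝ) + 1 ≤ (J : ℝ) := by
        exact_mod_cast Nat.succ_le_of_lt (v i).isLt
      constructor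
      · rw [hφv, le_div_iff₀ hk0]
        have : (0:ℝ) ≤ (v i : ℝ) := by positivity
        nlinarith
      · rw [hφv, div_le_iff₀ hk0]
        nlinarith
    · intro i
      refine ⟨⌈(k:ℝ) * α i⌉ + (v i : ℕ), ?_⟩
      have : ((⌈(k:ℝ) * α i⌉ : ℝ) + (v i : ℝ)) / k * k = (⌈(k:ℝ) * α i⌉ : ℝ) + (v i : ℝ) :=
        div_mul_cancel₀ _ (ne_of_gt hk0)
      rw [hφv]
      push_cast
      linarith [this]
  calc (J ^ n : ℕ) = (Set.range φ).ncard := by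
        rw [← Set.image_univ, Set.ncard_image_of_injective _ hinj, Set.ncard_univ]
        rw [Nat.card_eq_fintype_card, Fintype.card_fun, Fintype.card_fin, Fintype.card_fin]
    _ ≤ T.ncard := Set.ncard_le_ncard (Set.range_subset_iff.mpr hmem) hT

theorem stmt11 (n : ℕ) (hn : 0 < n) (Δ : Set (EuclideanSpace ℝ (Fin n)))
    (hne : Δ.Nonempty) (hcp : IsCompact Δ) (hcv : Convex ℝ Δ)
    (hint : (interior Δ).Nonempty)
    (σ S₀ : ℝ)
    (hσ : σ = sInf ((fun x : EuclideanSpace ℝ (Fin n) => x ⟨0, hn⟩) '' Δ))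
    (hS₀ : S₀ = sSup ((fun x : EuclideanSpace ℝ (Fin n) => x ⟨0, hn⟩) '' Δ)) :
    ∃ C : ℝ, 0 < C ∧ ∀ k : ℕ, 1 ≤ k → ∀ s : ℝ, (σ + S₀) / 2 ≤ s → s ≤ S₀ →
      S₀ - s ≤ C * ((1 + ((Δ ∩ {x : EuclideanSpace ℝ (Fin n) | s < x ⟨0, hn⟩}
          ∩ lpts n k).ncard : ℝ)) ^ ((1 : ℝ) / n)) / (k : ℝ) := by
  set e : Fin n := ⟨0, hn⟩ with he
  have hproj : Continuous fun x : EuclideanSpace ℝ (Fin n) => x e := by fun_prop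
  have hKcp : IsCompact ((fun x : EuclideanSpace ℝ (Fin n) => x e) '' Δ) := hcp.image hproj
  have hKne : ((fun x : EuclideanSpace ℝ (Fin n) => x e) '' Δ).Nonempty := hne.image _
  have hS₀mem : S₀ ∈ ((fun x : EuclideanSpace ℝ (Fin n) => x e) '' Δ) := by
    rw [hS₀]; exact hKcp.sSup_mem hKne
  obtain ⟨p, hpΔ, hp1⟩ := hS₀mem
  have hσle : ∀ x ∈ Δ, σ ≤ x e := fun x hx => by
    rw [hσ]; exact csInf_le hKcp.bddBelow ⟨x, hx, rfl⟩
  have hS₀ge : ∀ x ∈ Δ, x e ≤ S₀ := fun x hx => by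
    rw [hS₀]; exact le_csSup hKcp.bddAbove ⟨x, hx, rfl⟩
  have hσS : σ ≤ S₀ := le_of_le_of_eq (hσle p hpΔ) hp1
  obtain ⟨z, hz⟩ := hint
  have hzΔ : z ∈ Δ := interior_subset hz
  obtain ⟨ε, hε, hball⟩ := Metric.mem_nhds_iff.mp (mem_interior_iff_mem_nhds.mp hz)
  have hn0 : (0:ℝ) < n := by exact_mod_cast hn
  have hsq : (0:ℝ) < Real.sqrt n := Real.sqrt_pos.mpr hn0
  set δ : ℝ := ε / (2 * Real.sqrt n) with hδdef
  have hδ : 0 < δ := by positivity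
  set M : ℝ := S₀ - σ + δ with hMdef
  have hM0 : 0 < M := by rw [hMdef]; linarith
  refine ⟨2*M/δ, by positivity, ?_⟩
  intro k hk s hs1 hs2
  have hk0 : (0:ℝ) < k := by exact_mod_cast hk
  set N := (Δ ∩ {x : EuclideanSpace ℝ (Fin n) | s < x e} ∩ lpts n k).ncard with hNdef
  have hNfin : (Δ ∩ {x : EuclideanSpace ℝ (Fin n) | s < x e} ∩ lpts n k).Finite :=
    lpts_inter_finite n k hk _ (hcp.isBounded.subset inter_subset_left)
  have hP0 : (0:ℝ) ≤ (1 + (N:ℝ)) ^ ((1:ℝ)/n) := by positivity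
  have hP1 : (1:ℝ) ≤ (1 + (N:ℝ)) ^ ((1:ℝ)/n) := by
    calc (1:ℝ) = 1 ^ ((1:ℝ)/n) := (Real.one_rpow _).symm
    _ ≤ (1 + (N:ℝ)) ^ ((1:ℝ)/n) :=
      Real.rpow_le_rpow zero_le_one (by linarith [(Nat.cast_nonneg N : (0:ℝ) ≤ (N:ℝ))]) (by positivity)
  rcases le_or_gt S₀ s with hss | hss
  · have : (0:ℝ) ≤ 2*M/δ * ((1 + (N:ℝ)) ^ ((1:ℝ)/n)) / k := by positivity
    linarith
  -- nontrivial case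
  set t : ℝ := (S₀ - s)/(2*M) with htdef
  have ht0 : 0 < t := by rw [htdef]; apply div_pos (by linarith) (by linarith)
  have hts : S₀ - s ≤ M := by rw [hMdef]; linarith
  have ht1 : t ≤ 1 := by
    rw [htdef, div_le_one (by linarith)]; linarith
  set β : Fin n → ℝ := fun i => (1-t) * p i + t * z i with hβdef
  set L : ℝ := 2*t*δ with hLdef
  have hL0 : 0 < L := by rw [hLdef]; positivity
  have htM : t * (2*M) = S₀ - s := by
    rw [htdef]; field_simp
  -- the box is contained in the relevant set
  have hBs : {x : EuclideanSpace ℝ (Fin n) | ∀ i, (β i - t*δ) ≤ x i ∧ x i ≤ (β i - t*δ) + L}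
      ∩ lpts n k ⊆ Δ ∩ {x : EuclideanSpace ℝ (Fin n) | s < x e} ∩ lpts n k := by
    rintro x ⟨hxB, hxl⟩
    have hbound : ∀ i, |x i - β i| ≤ t*δ := by
      intro i
      obtain ⟨hb1, hb2⟩ := hxB i
      rw [abs_le]
      constructor <;> [linarith; (rw [hLdef] at hb2; linarith)]
    refine ⟨⟨?_, ?_⟩, hxl⟩
    · -- x ∈ Δ
      set y : EuclideanSpace ℝ (Fin n) := WithLp.toLp 2 (fun i => z i + (x i - β i)/t) with hydef
      have hyΔ : y ∈ Δ := by
        apply hball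
        rw [Metric.mem_ball, EuclideanSpace.dist_eq]
        have hsum : ∑ i, dist (y i) (z i) ^ 2 ≤ (n:ℝ) * δ^2 := by
          have hterm : ∀ i ∈ Finset.univ, dist (y i) (z i) ^ 2 ≤ δ^2 := by
            intro i _
            have h1 : dist (y i) (z i) = |(x i - β i)/t| := by
              rw [Real.dist_eq, hydef, PiLp.toLp_apply]; ring_nf
            rw [h1, abs_div, abs_of_pos ht0, div_pow]
            rw [div_le_iff₀ (by positivity)]
            have := hbound i
            nlinarith [abs_nonneg (x i - β i), hδ.le, ht0.le]
          calc ∑ i, dist (y i) (z i) ^ 2 ≤ ∑ _i : Fin n, δ^2 :=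
                Finset.sum_le_sum hterm
          _ = (n:ℝ) * δ^2 := by rw [Finset.sum_const]; simp [mul_comm]
        have : Real.sqrt (∑ i, dist (y i) (z i) ^ 2) ≤ Real.sqrt ((n:ℝ) * δ^2) :=
          Real.sqrt_le_sqrt hsum
        apply lt_of_le_of_lt this
        rw [show (n:ℝ) * δ^2 = (Real.sqrt n * δ)^2 by
              rw [mul_pow, Real.sq_sqrt hn0.le],
          Real.sqrt_sq (by positivity)]
        have hδε : Real.sqrt n * δ = ε/2 := by
          rw [hδdef]; field_simp
        rw [hδε]; linarith
      have hx_eq : x = (1-t) • p + t • y := by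
        ext i
        show x i = (1-t) * p i + t * (z i + (x i - β i)/t)
        rw [hβdef]
        field_simp
        ring
      rw [hx_eq]
      exact hcv hpΔ hyΔ (by linarith) ht0.le (by ring)
    · -- s < x e
      have h1 : β e - t*δ ≤ x e := (hxB e).1
      have hp1' : p e = S₀ := hp1
      have hβe : β e = (1-t) * S₀ + t * z e := by rw [hβdef, ← hp1']
      have hze : σ ≤ z e := hσle z hzΔ
      have h4 : t * (S₀ - z e + δ) ≤ t * M := by
        apply mul_le_mul_of_nonneg_left _ ht0.le
        rw [hMdef]; linarith
      have h5 : β e - t*δ = S₀ - t*(S₀ - z e + δ) := by rw [hβe]; ring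
      have h6 : t*M = (S₀-s)/2 := by rw [← htM]; ring
      show s < x e
      linarith [h1, h5, h4, h6, hss]
  clear_value δ M t β L
  rcases lt_or_ge ((k:ℝ)*L) 1 with hkL | hkL
  · -- small box: fewer than one lattice spacing
    rw [le_div_iff₀ hk0, show (2*M/δ) = 2*(M/δ) by ring]
    have hEq : (S₀ - s) * k = ((k:ℝ)*L) * (M/δ) := by
      rw [hLdef, show ((k:ℝ)*(2*t*δ))*(M/δ) = (t*(2*M))*k*(δ/δ) by ring,
        div_self hδ.ne', mul_one, htM]
    have h5 : ((k:ℝ)*L) * (M/δ) ≤ 1 * (M/δ) :=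
      mul_le_mul_of_nonneg_right hkL.le (div_nonneg hM0.le hδ.le)
    have h6 : (0:ℝ) ≤ 2*(M/δ) := by positivity
    have h7 : (0:ℝ) ≤ M/δ := div_nonneg hM0.le hδ.le
    linarith [mul_le_mul_of_nonneg_left hP1 h6]
  · -- large box: count lattice points
    set J : ℕ := (⌊(k:ℝ)*L⌋).toNat with hJdef
    have hfl0 : (0:ℤ) ≤ ⌊(k:ℝ)*L⌋ := Int.floor_nonneg.mpr (by linarith)
    have hJcast : ((J:ℤ):ℝ) = ((⌊(k:ℝ)*L⌋ : ℤ) : ℝ) := by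
      rw [hJdef, Int.toNat_of_nonneg hfl0]
    have hJle : (J:ℝ) ≤ (k:ℝ)*L := by
      have := Int.floor_le ((k:ℝ)*L)
      push_cast at hJcast ⊢
      linarith
    have hJge : (k:ℝ)*L/2 ≤ (J:ℝ) := by
      have h1 : (k:ℝ)*L - 1 < ((⌊(k:ℝ)*L⌋ : ℤ) : ℝ) := Int.sub_one_lt_floor _
      have h2 : (1:ℝ) ≤ ((⌊(k:ℝ)*L⌋ : ℤ) : ℝ) := by
        exact_mod_cast Int.le_floor.mpr (by exact_mod_cast hkL)
      push_cast at hJcast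
      rcases le_or_gt ((k:ℝ)*L) 2 with h3 | h3 <;> linarith
    have hcount : (J ^ n : ℕ) ≤ N :=
      count_box n k J hk (fun i => β i - t*δ) L hJle _ hNfin hBs
    have hJn : ((k:ℝ)*L/2)^n ≤ 1 + (N:ℝ) := by
      have hc : ((J:ℝ))^n ≤ (N:ℝ) := by exact_mod_cast hcount
      have := pow_le_pow_left₀ (by linarith : (0:ℝ) ≤ (k:ℝ)*L/2) hJge n
      linarith
    have hroot : (k:ℝ)*L/2 ≤ (1 + (N:ℝ)) ^ ((1:ℝ)/n) := by
      have h0 : (0:ℝ) ≤ (k:ℝ)*L/2 := by linarith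
      calc (k:ℝ)*L/2 = (((k:ℝ)*L/2)^n)^((1:ℝ)/n) := by
            rw [← Real.rpow_natCast ((k:ℝ)*L/2) n, ← Real.rpow_mul h0,
              mul_one_div, div_self (by exact_mod_cast hn.ne' : (n:ℝ) ≠ 0), Real.rpow_one]
      _ ≤ (1 + (N:ℝ)) ^ ((1:ℝ)/n) :=
        Real.rpow_le_rpow (pow_nonneg h0 n) hJn (by positivity)
    rw [le_div_iff₀ hk0, show (2*M/δ) = 2*(M/δ) by ring]
    have hEq : (S₀ - s) * k = (2*(M/δ)) * ((k:ℝ)*L/2) := by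
      rw [hLdef, show (2*(M/δ))*((k:ℝ)*(2*t*δ)/2) = (t*(2*M))*k*(δ/δ) by ring,
        div_self hδ.ne', mul_one, htM]
    have h8 : (2*(M/δ)) * ((k:ℝ)*L/2) ≤ (2*(M/δ)) * ((1 + (N:ℝ)) ^ ((1:ℝ)/n)) :=
      mul_le_mul_of_nonneg_left hroot (by positivity)
    linarith
end
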